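/- Let 0 ≤ u < n−1, put i = SA[u] and j = SA[u+1], and assume i ≤ n−2, j ≤ n−2 and T[i] = T[j]. Let v = ISA[i+1] and w = ISA[j+1], and assume either u+1 < min(v,w) or max(v,w) < u. Then LCP[u+1] = min{ LCP[k] : min(v,w) < k ≤ max(v,w) } + 1. -/

import Mathlib

/-- The suffix `S_i = T[i..n)` of the text `T` of length `n`, as a list. -/
def suff {α : Type*} (T : ℕ → α) (n i : ℕ) : List α :=
  (List.range (n - i)).map (fun t => T (i + t))

/-- `S_i` has type B: there is a `k ≥ i` with `T[k] < T[k+1]` and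
`T[m] = T[m+1]` for all `i ≤ m < k`. -/
def TypeB {α : Type*} [LinearOrder α] (T : ℕ → α) (n i : ℕ) : Prop :=
  ∃ k, i ≤ k ∧ k + 1 < n ∧ T k < T (k + 1) ∧ ∀ m, i ≤ m → m < k → T m = T (m + 1)

/-- `S_i` has type A: either there is a `k ≥ i` with `T[k] > T[k+1]` and
`T[m] = T[m+1]` for all `i ≤ m < k`, or all characters from position `i`
to the end are equal (the type propagates from `S_{n-1}`). -/
def TypeA {α : Type*} [LinearOrder α] (T : ℕ → α) (n i : ℕ) : Prop :=
  (∃ k, i ≤ k ∧ k + 1 < n ∧ T (k + 1) < T k ∧ ∀ m, i ≤ m → m < k → T m = T (m + 1))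
  ∨ (∀ m, i ≤ m → m + 1 < n → T m = T (m + 1))

/-- `S_i` is a B*-suffix: `S_i` has type B and `S_{i+1}` has type A. -/
def TypeBStar {α : Type*} [LinearOrder α] (T : ℕ → α) (n i : ℕ) : Prop :=
  TypeB T n i ∧ TypeA T n (i + 1)

/-- `lcp T n i j` is the largest `s ≥ 0` with `i + s ≤ n`, `j + s ≤ n` and
`T[i+t] = T[j+t]` for all `t < s`. -/
noncomputable def lcp {α : Type*} (T : ℕ → α) (n i j : ℕ) : ℕ :=
  sSup {s | i + s ≤ n ∧ j + s ≤ n ∧ ∀ t, t < s → T (i + t) = T (j + t)}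

section Stmt10Aux

set_option linter.unusedSectionVars false

variable {α : Type*} [LinearOrder α]

lemma lcp_bdd (T : ℕ → α) (n i j : ℕ) :
    BddAbove {s | i + s ≤ n ∧ j + s ≤ n ∧ ∀ t, t < s → T (i + t) = T (j + t)} :=
  ⟨n, fun s hs => le_trans (Nat.le_add_left s i) hs.1⟩

lemma lcp_mem (T : ℕ → α) {n i j : ℕ} (hi : i ≤ n) (hj : j ≤ n) :
    i + lcp T n i j ≤ n ∧ j + lcp T n i j ≤ n ∧
      ∀ t, t < lcp T n i j → T (i + t) = T (j + t) := by
  have h0 : (0 : ℕ) ∈ {s | i + s ≤ n ∧ j + s ≤ n ∧ ∀ t, t < s → T (i + t) = T (j + t)} :=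
    ⟨by simpa using hi, by simpa using hj, fun t ht => absurd ht (Nat.not_lt_zero t)⟩
  exact Nat.sSup_mem ⟨0, h0⟩ (lcp_bdd T n i j)

lemma le_lcp (T : ℕ → α) {n i j s : ℕ} (h1 : i + s ≤ n) (h2 : j + s ≤ n)
    (h3 : ∀ t, t < s → T (i + t) = T (j + t)) : s ≤ lcp T n i j :=
  le_csSup (lcp_bdd T n i j) ⟨h1, h2, h3⟩

lemma lcp_comm (T : ℕ → α) (n i j : ℕ) : lcp T n i j = lcp T n j i := by
  unfold lcp; congr 1; ext s
  exact ⟨fun ⟨a, b, c⟩ => ⟨b, a, fun t ht => (c t ht).symm⟩,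
         fun ⟨a, b, c⟩ => ⟨b, a, fun t ht => (c t ht).symm⟩⟩

lemma lcp_succ (T : ℕ → α) {n i j : ℕ} (hi : i + 1 ≤ n) (hj : j + 1 ≤ n) (hT : T i = T j) :
    lcp T n i j = lcp T n (i + 1) (j + 1) + 1 := by
  obtain ⟨a1, a2, a3⟩ := lcp_mem T (n := n) (i := i) (j := j) (by omega) (by omega)
  obtain ⟨b1, b2, b3⟩ := lcp_mem T (n := n) (i := i + 1) (j := j + 1) hi hj
  have h1 : lcp T n (i + 1) (j + 1) + 1 ≤ lcp T n i j := by
    apply le_lcp T (by omega) (by omega)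
    intro t ht
    cases t with
    | zero => simpa using hT
    | succ t' =>
      have := b3 t' (by omega)
      have e1 : i + (t' + 1) = i + 1 + t' := by omega
      have e2 : j + (t' + 1) = j + 1 + t' := by omega
      rw [e1, e2]; exact this
  have hone : 1 ≤ lcp T n i j := by
    apply le_lcp T (by omega) (by omega)
    intro t ht
    have : t = 0 := by omega
    simpa [this] using hT
  have h2 : lcp T n i j - 1 ≤ lcp T n (i + 1) (j + 1) := by
    apply le_lcp T (by omega) (by omega)
    intro t ht
    have := a3 (t + 1) (by omega)
    have e1 : i + (t + 1) = i + 1 + t := by omega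
    have e2 : j + (t + 1) = j + 1 + t := by omega
    rw [e1, e2] at this; exact this
  omega

lemma suff_nil (T : ℕ → α) {n i : ℕ} (h : n ≤ i) : suff T n i = [] := by
  simp [suff, Nat.sub_eq_zero_of_le h]

lemma suff_cons (T : ℕ → α) {n i : ℕ} (h : i < n) :
    suff T n i = T i :: suff T n (i + 1) := by
  unfold suff
  have e : n - i = (n - (i + 1)) + 1 := by omega
  rw [e, List.range_succ_eq_map, List.map_cons, List.map_map]
  refine congrArg₂ _ (by simp) ?_
  apply List.map_congr_left
  intro t _
  simp only [Function.comp_apply, Nat.succ_eq_add_one]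
  congr 1
  omega

lemma lex_cons_elim {a b : α} {l m : List α} (h : List.Lex (· < ·) (a :: l) (b :: m)) :
    a < b ∨ (a = b ∧ List.Lex (· < ·) l m) := by
  cases h with
  | rel hr => exact Or.inl hr
  | cons h' => exact Or.inr ⟨rfl, h'⟩

lemma char_of_lex (T : ℕ → α) (n : ℕ) :
    ∀ d x y, n - x ≤ d → x ≤ n → y ≤ n →
      List.Lex (· < ·) (suff T n x) (suff T n y) →
      ∃ s, (∀ t, t < s → T (x + t) = T (y + t)) ∧ y + s < n ∧
        (x + s = n ∨ (x + s < n ∧ T (x + s) < T (y + s))) := by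
  intro d
  induction d with
  | zero =>
    intro x y hd hx hy h
    have hxn : x = n := by omega
    rcases lt_or_ge y n with hyn | hyn
    · exact ⟨0, fun t ht => absurd ht (Nat.not_lt_zero t), by omega, Or.inl (by omega)⟩
    · rw [suff_nil T hyn] at h
      exact absurd h (List.not_lex_nil)
  | succ d ih =>
    intro x y hd hx hy h
    rcases lt_or_ge x n with hxn | hxn
    · rcases lt_or_ge y n with hyn | hyn
      · rw [suff_cons T hxn, suff_cons T hyn] at h
        rcases lex_cons_elim h with hr | ⟨hEq, h'⟩
        · exact ⟨0, fun t ht => absurd ht (Nat.not_lt_zero t), by omega,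
            Or.inr ⟨by omega, by simpa using hr⟩⟩
        · obtain ⟨s, hs1, hs2, hs3⟩ := ih (x + 1) (y + 1) (by omega) (by omega) (by omega) h'
          refine ⟨s + 1, ?_, by omega, ?_⟩
          · intro t ht
            cases t with
            | zero => simpa using hEq
            | succ t' =>
              have := hs1 t' (by omega)
              have e1 : x + (t' + 1) = x + 1 + t' := by omega
              have e2 : y + (t' + 1) = y + 1 + t' := by omega
              rw [e1, e2]; exact this
          · have e1 : x + (s + 1) = x + 1 + s := by omega
            have e2 : y + (s + 1) = y + 1 + s := by omega
            rw [e1, e2]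
            exact hs3
      · rw [suff_nil T hyn] at h
        exact absurd h (List.not_lex_nil)
    · rcases lt_or_ge y n with hyn | hyn
      · exact ⟨0, fun t ht => absurd ht (Nat.not_lt_zero t), by omega, Or.inl (by omega)⟩
      · rw [suff_nil T hyn] at h
        exact absurd h (List.not_lex_nil)

/-- Characterization of the lcp of two lexicographically ordered suffixes. -/
lemma lcp_char (T : ℕ → α) {n x y : ℕ} (hx : x ≤ n) (hy : y ≤ n)
    (h : List.Lex (· < ·) (suff T n x) (suff T n y)) :
    y + lcp T n x y < n ∧
      (x + lcp T n x y = n ∨ T (x + lcp T n x y) < T (y + lcp T n x y)) := by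
  obtain ⟨s, hs1, hs2, hs3⟩ := char_of_lex T n (n - x) x y le_rfl hx hy h
  have hsle : s ≤ lcp T n x y := le_lcp T (by omega) (by omega) hs1
  have hles : lcp T n x y ≤ s := by
    by_contra hc
    push_neg at hc
    obtain ⟨a1, a2, a3⟩ := lcp_mem T (n := n) (i := x) (j := y) hx hy
    rcases hs3 with h1 | ⟨h1, h2⟩
    · omega
    · exact absurd (a3 s hc) (ne_of_lt h2)
  have he : s = lcp T n x y := le_antisymm hsle hles
  rw [← he]
  exact ⟨hs2, by tauto⟩

/-- Three-point lemma for lexicographically ordered suffixes. -/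
lemma lcp_min3 (T : ℕ → α) {n x y z : ℕ} (hx : x ≤ n) (hy : y ≤ n) (hz : z ≤ n)
    (hxy : List.Lex (· < ·) (suff T n x) (suff T n y))
    (hyz : List.Lex (· < ·) (suff T n y) (suff T n z)) :
    lcp T n x z = min (lcp T n x y) (lcp T n y z) := by
  obtain ⟨pc1, pc2⟩ := lcp_char T hx hy hxy
  obtain ⟨qc1, qc2⟩ := lcp_char T hy hz hyz
  obtain ⟨p1, p2, p3⟩ := lcp_mem T (n := n) (i := x) (j := y) hx hy
  obtain ⟨q1, q2, q3⟩ := lcp_mem T (n := n) (i := y) (j := z) hy hz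
  obtain ⟨L1, L2, L3⟩ := lcp_mem T (n := n) (i := x) (j := z) hx hz
  set p := lcp T n x y with hp
  set q := lcp T n y z with hq
  set L := lcp T n x z with hL
  have hge : min p q ≤ L := by
    apply le_lcp T (by omega) (by omega)
    intro t ht
    exact (p3 t (by omega)).trans (q3 t (by omega))
  have hle : L ≤ min p q := by
    by_contra hc
    push_neg at hc
    rcases le_or_gt p q with hpq | hqp
    · have hpL : p < L := by omega
      have hxpn : x + p < n := by omega
      rcases pc2 with h1 | h1
      · omega
      · have eq1 : T (x + p) = T (z + p) := L3 p hpL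
        rcases lt_or_eq_of_le hpq with hplt | hpe
        · have eq2 : T (y + p) = T (z + p) := q3 p hplt
          exact absurd (eq1.trans eq2.symm) (ne_of_lt h1)
        · rcases qc2 with h2 | h2
          · omega
          · rw [← hpe] at h2
            have : T (y + p) < T (y + p) :=
              lt_trans (h2.trans_le (le_of_eq eq1.symm)) h1
            exact lt_irrefl _ this
    · have hqL : q < L := by omega
      rcases qc2 with h1 | h1
      · omega
      · have e1 : T (x + q) = T (y + q) := p3 q (by omega)
        have e2 : T (x + q) = T (z + q) := L3 q hqL
        exact absurd (e1.symm.trans e2) (ne_of_lt h1)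
  exact le_antisymm hle hge

/-- Range-minimum property of the LCP values. -/
lemma lcp_range (T : ℕ → α) (n : ℕ) (SA : ℕ → ℕ)
    (hSAlt : ∀ u, u < n → SA u < n)
    (hSAsorted : ∀ u v, u < v → v < n →
      List.Lex (· < ·) (suff T n (SA u)) (suff T n (SA v))) :
    ∀ b a, a < b → b < n →
      lcp T n (SA a) (SA b) =
        sInf ((fun k => lcp T n (SA (k - 1)) (SA k)) '' Set.Ioc a b) := by
  intro b
  induction b with
  | zero => intro a hab _; omega
  | succ b ih =>
    intro a hab hb
    rcases Nat.lt_or_ge a b with hab' | hab'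
    · have hIoc : Set.Ioc a (b + 1) = insert (b + 1) (Set.Ioc a b) := by
        ext k; simp only [Set.mem_Ioc, Set.mem_insert_iff]; omega
      rw [hIoc, Set.image_insert_eq, csInf_insert (OrderBot.bddBelow _)
        ((Set.nonempty_Ioc.mpr hab').image _)]
      rw [← ih a hab' (by omega)]
      simp only [Nat.add_sub_cancel]
      rw [lcp_min3 T (le_of_lt (hSAlt a (by omega))) (le_of_lt (hSAlt b (by omega)))
        (le_of_lt (hSAlt (b + 1) hb))
        (hSAsorted a b hab' (by omega)) (hSAsorted b (b + 1) (by omega) hb)]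
      exact (min_comm _ _)
    · have hae : a = b := by omega
      subst hae
      have hIoc : Set.Ioc a (a + 1) = {a + 1} := by
        ext k; simp only [Set.mem_Ioc, Set.mem_singleton_iff]; omega
      rw [hIoc, Set.image_singleton, csInf_singleton]
      simp

end Stmt10Aux

/-- Inducing an LCP-value as a range minimum: if `i = SA[u]` and
`j = SA[u+1]` start with the same character, `v = ISA[i+1]`,
`w = ISA[j+1]`, and either `u + 1 < min v w` or `max v w < u`, then
`LCP[u+1] = min { LCP[k] : min v w < k ≤ max v w } + 1`. -/
theorem stmt_10 {α : Type*} [LinearOrder α] (T : ℕ → α) (n : ℕ) (hn : 1 ≤ n)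
    (SA ISA LCPA : ℕ → ℕ)
    (hSAlt : ∀ u, u < n → SA u < n)
    (hSAsorted : ∀ u v, u < v → v < n →
      List.Lex (· < ·) (suff T n (SA u)) (suff T n (SA v)))
    (hSAsurj : ∀ p, p < n → ∃ u, u < n ∧ SA u = p)
    (hISA : ∀ p, p < n → ISA p < n ∧ SA (ISA p) = p)
    (hLCPA : ∀ k, 1 ≤ k → k < n → LCPA k = lcp T n (SA (k - 1)) (SA k))
    (u i j v w : ℕ) (hu : u < n - 1)
    (hiSA : i = SA u) (hjSA : j = SA (u + 1))
    (hi : i ≤ n - 2) (hj : j ≤ n - 2) (hT : T i = T j)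
    (hv : v = ISA (i + 1)) (hw : w = ISA (j + 1))
    (hside : u + 1 < min v w ∨ max v w < u) :
    LCPA (u + 1) = sInf (LCPA '' {k | min v w < k ∧ k ≤ max v w}) + 1 := by
  have hn2 : 2 ≤ n := by omega
  have hu1 : u + 1 < n := by omega
  have hun : u < n := by omega
  have hilt : i < n := hiSA ▸ hSAlt u hun
  have hjlt : j < n := hjSA ▸ hSAlt (u + 1) hu1
  have hi1 : i + 1 < n := by omega
  have hj1 : j + 1 < n := by omega
  obtain ⟨hvlt, hSAv⟩ := hISA (i + 1) hi1
  obtain ⟨hwlt, hSAw⟩ := hISA (j + 1) hj1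
  rw [← hv] at hvlt hSAv
  rw [← hw] at hwlt hSAw
  have hLexuu : List.Lex (· < ·) (suff T n i) (suff T n j) := by
    rw [hiSA, hjSA]; exact hSAsorted u (u + 1) (Nat.lt_succ_self u) hu1
  have hij : i ≠ j := by
    intro he
    rw [he] at hLexuu
    obtain ⟨c1, _⟩ := lcp_char T (le_of_lt hjlt) (le_of_lt hjlt) hLexuu
    have : n - j ≤ lcp T n j j :=
      le_lcp T (by omega) (by omega) (fun t _ => rfl)
    omega
  have hvw : v ≠ w := by
    intro he
    apply hij
    have : i + 1 = j + 1 := by rw [← hSAv, ← hSAw, he]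
    omega
  -- main chain
  have hL : LCPA (u + 1) = lcp T n i j := by
    rw [hLCPA (u + 1) (by omega) hu1]
    simp only [Nat.add_sub_cancel]
    rw [hiSA, hjSA]
  have hstep : lcp T n i j = lcp T n (SA v) (SA w) + 1 := by
    rw [lcp_succ T (le_of_lt hi1) (le_of_lt hj1) hT, hSAv, hSAw]
  have himg : ∀ a b : ℕ, b < n →
      LCPA '' {k | a < k ∧ k ≤ b} = (fun k => lcp T n (SA (k - 1)) (SA k)) '' Set.Ioc a b := by
    intro a b hbn
    have : {k | a < k ∧ k ≤ b} = Set.Ioc a b := by ext k; simp [Set.mem_Ioc]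
    rw [this]
    apply Set.image_congr
    intro k hk
    simp only [Set.mem_Ioc] at hk
    exact hLCPA k (by omega) (by omega)
  rcases lt_or_gt_of_ne hvw with hlt | hgt
  · rw [min_eq_left (le_of_lt hlt), max_eq_right (le_of_lt hlt)]
    rw [hL, hstep, himg v w hwlt,
      ← lcp_range T n SA hSAlt hSAsorted w v hlt hwlt]
  · rw [min_eq_right (le_of_lt hgt), max_eq_left (le_of_lt hgt)]
    rw [hL, hstep, himg w v hvlt,
      ← lcp_range T n SA hSAlt hSAsorted v w hgt hvlt, lcp_comm T n (SA v) (SA w)]
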